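/- For complex numbers (t2, t6), the surface in ℂ³ defined by F(x,y,z) = x·y·(x+y) − (t2/2)·x·y + (1/4)·(t6 + t2³/108) − z² = 0 has a singular point (a point of the surface at which all three partial derivatives of F vanish) if and only if (t6 + t2³/108)·(t6 − t2³/108) = 0. (This computes the discriminant of the semiuniversal deformation of the simple singularity of type G₂ = (D₄, ℤ/3ℤ).) -/

import Mathlib

private lemma dX (y z t2 t6 x : ℂ) :
    deriv (fun x' : ℂ => x' * y * (x' + y) - (t2 / 2) * x' * y
        + (1/4) * (t6 + t2 ^ 3 / 108) - z ^ 2) x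
      = 2*x*y + y^2 - (t2/2)*y := by
  have h : HasDerivAt (fun x' : ℂ => x' * y * (x' + y) - (t2 / 2) * x' * y
      + (1/4) * (t6 + t2 ^ 3 / 108) - z ^ 2) (2*x*y + y^2 - (t2/2)*y) x := by
    have h1 := ((hasDerivAt_id x).mul_const y).mul ((hasDerivAt_id x).add_const y)
    have h2 := ((hasDerivAt_id x).const_mul (t2/2)).mul_const y
    have h3 := ((h1.sub h2).add_const ((1/4) * (t6 + t2 ^ 3 / 108))).sub_const (z^2)
    simp only [id_eq] at h3
    exact h3.congr_deriv (by ring)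
  exact h.deriv

private lemma dY (x z t2 t6 y : ℂ) :
    deriv (fun y' : ℂ => x * y' * (x + y') - (t2 / 2) * x * y'
        + (1/4) * (t6 + t2 ^ 3 / 108) - z ^ 2) y
      = x^2 + 2*x*y - (t2/2)*x := by
  have h : HasDerivAt (fun y' : ℂ => x * y' * (x + y') - (t2 / 2) * x * y'
      + (1/4) * (t6 + t2 ^ 3 / 108) - z ^ 2) (x^2 + 2*x*y - (t2/2)*x) y := by
    have h1 := ((hasDerivAt_id y).const_mul x).mul ((hasDerivAt_id y).const_add x)
    have h2 := (hasDerivAt_id y).const_mul (t2 / 2 * x)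
    have h3 := ((h1.sub h2).add_const ((1/4) * (t6 + t2 ^ 3 / 108))).sub_const (z^2)
    simp only [id_eq] at h3
    have he : (fun y' : ℂ => x * y' * (x + y') - (t2 / 2) * x * y'
        + (1/4) * (t6 + t2 ^ 3 / 108) - z ^ 2)
        = (fun y' : ℂ => x * y' * (x + y') - (t2 / 2 * x) * y'
        + (1/4) * (t6 + t2 ^ 3 / 108) - z ^ 2) := by
      funext y'; ring
    rw [he]
    exact h3.congr_deriv (by ring)
  exact h.deriv

private lemma dZ (x y t2 t6 z : ℂ) :
    deriv (fun z' : ℂ => x * y * (x + y) - (t2 / 2) * x * y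
        + (1/4) * (t6 + t2 ^ 3 / 108) - z' ^ 2) z
      = -(2*z) := by
  have h : HasDerivAt (fun z' : ℂ => x * y * (x + y) - (t2 / 2) * x * y
      + (1/4) * (t6 + t2 ^ 3 / 108) - z' ^ 2) (-(2*z)) z := by
    have h3 := (hasDerivAt_const z (x * y * (x + y) - (t2 / 2) * x * y
      + (1/4) * (t6 + t2 ^ 3 / 108))).sub (hasDerivAt_pow 2 z)
    exact h3.congr_deriv (by norm_num)
  exact h.deriv

/-- Discriminant of the semiuniversal deformation of the simple singularity of type
G₂ = (D₄, ℤ/3ℤ). -/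
theorem stmt_11 (t2 t6 : ℂ) :
    (∃ x y z : ℂ,
      x * y * (x + y) - (t2 / 2) * x * y + (1/4) * (t6 + t2 ^ 3 / 108) - z ^ 2 = 0 ∧
      deriv (fun x' : ℂ =>
        x' * y * (x' + y) - (t2 / 2) * x' * y + (1/4) * (t6 + t2 ^ 3 / 108) - z ^ 2) x = 0 ∧
      deriv (fun y' : ℂ =>
        x * y' * (x + y') - (t2 / 2) * x * y' + (1/4) * (t6 + t2 ^ 3 / 108) - z ^ 2) y = 0 ∧
      deriv (fun z' : ℂ =>
        x * y * (x + y) - (t2 / 2) * x * y + (1/4) * (t6 + t2 ^ 3 / 108) - z' ^ 2) z = 0) ↔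
    (t6 + t2 ^ 3 / 108) * (t6 - t2 ^ 3 / 108) = 0 := by
  constructor
  · rintro ⟨x, y, z, hF, hdx, hdy, hdz⟩
    rw [dX] at hdx
    rw [dY] at hdy
    rw [dZ] at hdz
    have hz : z = 0 := by linear_combination -hdz / 2
    subst hz
    have h1 : y * (2*x + y - t2/2) = 0 := by linear_combination hdx
    have h2 : x * (x + 2*y - t2/2) = 0 := by linear_combination hdy
    rcases mul_eq_zero.mp h1 with hy | hy
    · subst hy
      rcases mul_eq_zero.mp h2 with hx | hx
      · subst hx
        linear_combination 4 * (t6 - t2^3/108) * hF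
      · have hx' : x = t2/2 := by linear_combination hx
        subst hx'
        linear_combination 4 * (t6 - t2^3/108) * hF
    · rcases mul_eq_zero.mp h2 with hx | hx
      · subst hx
        have hy' : y = t2/2 := by linear_combination hy
        subst hy'
        linear_combination 4 * (t6 - t2^3/108) * hF
      · have hx' : x = t2/6 := by linear_combination 2/3 * hy - 1/3 * hx
        have hy' : y = t2/6 := by linear_combination 2/3 * hx - 1/3 * hy
        subst hx'; subst hy'
        linear_combination 4 * (t6 + t2^3/108) * hF
  · intro h
    rcases mul_eq_zero.mp h with h | h
    · refine ⟨0, 0, 0, by linear_combination (1/4 : ℂ) * h, ?_, ?_, ?_⟩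
      · rw [dX]; ring
      · rw [dY]; ring
      · rw [dZ]; ring
    · refine ⟨t2/6, t2/6, 0, by linear_combination (1/4 : ℂ) * h, ?_, ?_, ?_⟩
      · rw [dX]; ring
      · rw [dY]; ring
      · rw [dZ]; ring
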